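/- Let a, σ > 0, b ≥ 0, τ > 0, T ∈ ℝ, let w ∈ [0, (k(0)−a)/σ²) where k(x) := √(a² + 2(1+b·x)·σ²), let (φⱼ)ⱼ≥₀ be the solution of the recursive delayed Riccati system with final datum w, and define w̄₀ := (k(0)−a)/σ², w̄ⱼ₊₁ := max(w̄ⱼ, (k(w̄ⱼ)−a)/σ²), and L := lim_{j→∞} w̄ⱼ (which exists and is finite). Then for every j ≥ 0 and every t ∈ [T−(j+1)τ, T−jτ], 0 ≤ φⱼ(t) ≤ L, and moreover L ≤ max( (k(0)−a)/σ², (b − a + √((b−a)² + 2σ²))/σ² ). -/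

import Mathlib

/-- k(x) := √(a² + 2(1+b·x)·σ²). -/
noncomputable def kfun (a b σ x : ℝ) : ℝ := Real.sqrt (a ^ 2 + 2 * (1 + b * x) * σ ^ 2)

/-- The domain [T−(j+1)τ, T−jτ] of the j-th component of the recursive delayed
Riccati system. -/
def riccatiDom (T τ : ℝ) (j : ℕ) : Set ℝ :=
  Set.Icc (T - ((j : ℝ) + 1) * τ) (T - (j : ℝ) * τ)

/-- The recursive delayed Riccati system with delay τ, horizon T and final datum w. -/
def DelayedRiccatiSol (a b σ τ T w : ℝ) (φ : ℕ → ℝ → ℝ) : Prop :=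
  φ 0 T = w ∧
  (∀ t ∈ riccatiDom T τ 0, HasDerivWithinAt (φ 0)
    (σ ^ 2 / 2 * (φ 0 t) ^ 2 + a * φ 0 t - 1) (riccatiDom T τ 0) t) ∧
  (∀ j : ℕ, φ (j + 1) (T - ((j : ℝ) + 1) * τ) = φ j (T - ((j : ℝ) + 1) * τ)) ∧
  (∀ j : ℕ, ∀ t ∈ riccatiDom T τ (j + 1), HasDerivWithinAt (φ (j + 1))
    (σ ^ 2 / 2 * (φ (j + 1) t) ^ 2 + a * φ (j + 1) t - 1 - b * φ j (t + τ))
    (riccatiDom T τ (j + 1)) t)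

open Set Filter Topology

/-- Backward-in-time sign invariance: if `f B ≥ 0` and `f' < 0` wherever `f = 0`,
then `f ≥ 0` on all of `[A, B]`. -/
lemma sign_back (A B : ℝ) (f f' : ℝ → ℝ)
    (hd : ∀ t ∈ Set.Icc A B, HasDerivWithinAt f (f' t) (Set.Icc A B) t)
    (hB : 0 ≤ f B)
    (hder : ∀ t ∈ Set.Icc A B, f t = 0 → f' t < 0) :
    ∀ t ∈ Set.Icc A B, 0 ≤ f t := by
  intro t₀ ht₀
  by_contra hcon
  push_neg at hcon
  have hcont : ContinuousOn f (Set.Icc A B) := fun t ht => (hd t ht).continuousWithinAt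
  have ht₀B : t₀ < B := lt_of_le_of_ne ht₀.2 (by rintro rfl; linarith)
  set S := {t ∈ Set.Icc t₀ B | 0 ≤ f t} with hSdef
  have hsub : Set.Icc t₀ B ⊆ Set.Icc A B := Set.Icc_subset_Icc ht₀.1 le_rfl
  have hScl : IsClosed S := by
    have : S = Set.Icc t₀ B ∩ f ⁻¹' Set.Ici 0 := rfl
    rw [this]
    exact (hcont.mono hsub).preimage_isClosed_of_isClosed isClosed_Icc isClosed_Ici
  have hSne : S.Nonempty := ⟨B, ⟨ht₀B.le, le_rfl⟩, hB⟩
  have hSbdd : BddBelow S := ⟨t₀, fun x hx => hx.1.1⟩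
  set s := sInf S with hsdef
  have hsS : s ∈ S := hScl.csInf_mem hSne hSbdd
  have hst₀ : t₀ < s := by
    rcases lt_or_eq_of_le hsS.1.1 with h | h
    · exact h
    · exact absurd hsS.2 (by rw [← h]; linarith)
  have hsAB : s ∈ Set.Icc A B := hsub hsS.1
  have hlt : ∀ t ∈ Set.Ico t₀ s, f t < 0 := by
    intro t ht
    by_contra h
    push_neg at h
    have : t ∈ S := ⟨⟨ht.1, ht.2.le.trans hsS.1.2⟩, h⟩
    exact absurd (csInf_le hSbdd this) (not_le.mpr ht.2)
  have hIcosub : Set.Ico t₀ s ⊆ Set.Icc A B := fun t ht =>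
    ⟨ht₀.1.trans ht.1, ht.2.le.trans hsAB.2⟩
  have hfilt : 𝓝[Set.Ico t₀ s] s = 𝓝[<] s := nhdsWithin_Ico_eq_nhdsLT hst₀
  haveI : (𝓝[Set.Ico t₀ s] s).NeBot := by rw [hfilt]; infer_instance
  have hle : 𝓝[Set.Ico t₀ s] s ≤ 𝓝[Set.Icc A B] s := nhdsWithin_mono _ hIcosub
  have hfs_le : f s ≤ 0 := by
    have := (hcont s hsAB).mono_left hle
    refine le_of_tendsto this ?_
    filter_upwards [self_mem_nhdsWithin] with t ht using (hlt t ht).le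
  have hfs : f s = 0 := le_antisymm hfs_le hsS.2
  have hds : f' s < 0 := hder s hsAB hfs
  have hslope := (hasDerivWithinAt_iff_tendsto_slope).mp (hd s hsAB)
  have hsub2 : Set.Ico t₀ s ⊆ Set.Icc A B \ {s} := fun t ht =>
    ⟨hIcosub ht, fun h => absurd (h ▸ ht.2) (lt_irrefl _)⟩
  have hslope2 : Filter.Tendsto (slope f s) (𝓝[Set.Ico t₀ s] s) (𝓝 (f' s)) :=
    hslope.mono_left (nhdsWithin_mono _ hsub2)
  have : 0 ≤ f' s := by
    refine ge_of_tendsto hslope2 ?_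
    filter_upwards [self_mem_nhdsWithin] with t ht
    have h1 : f t < 0 := hlt t ht
    have h2 : t - s < 0 := by linarith [ht.2]
    rw [slope_def_field, div_nonneg_iff]
    right
    exact ⟨by rw [hfs]; linarith, by linarith⟩
  linarith

section Aux
variable {a b σ : ℝ} (ha : 0 < a) (hσ : 0 < σ) (hb : 0 ≤ b)
include ha hσ hb

lemma karg_nonneg {x : ℝ} (hx : 0 ≤ x) : 0 ≤ a ^ 2 + 2 * (1 + b * x) * σ ^ 2 := by
  nlinarith [mul_nonneg hb hx, sq_nonneg a, sq_nonneg σ]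

lemma ksq {x : ℝ} (hx : 0 ≤ x) : (kfun a b σ x) ^ 2 = a ^ 2 + 2 * (1 + b * x) * σ ^ 2 :=
  Real.sq_sqrt (karg_nonneg ha hσ hb hx)

lemma k_ge_a {x : ℝ} (hx : 0 ≤ x) : a ≤ kfun a b σ x := by
  have h1 := ksq ha hσ hb hx
  have h2 : 0 ≤ kfun a b σ x := Real.sqrt_nonneg _
  nlinarith [mul_nonneg hb hx, sq_nonneg σ]

lemma g_nonneg {x : ℝ} (hx : 0 ≤ x) : 0 ≤ (kfun a b σ x - a) / σ ^ 2 :=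
  div_nonneg (by linarith [k_ge_a ha hσ hb hx]) (by positivity)

/-- q(g(x)) = 1 + b x where q(y) = σ²/2 y² + a y. -/
lemma q_g {x : ℝ} (hx : 0 ≤ x) :
    σ ^ 2 / 2 * ((kfun a b σ x - a) / σ ^ 2) ^ 2 + a * ((kfun a b σ x - a) / σ ^ 2)
      = 1 + b * x := by
  have h1 := ksq ha hσ hb hx
  have hσ2 : (σ : ℝ) ^ 2 ≠ 0 := by positivity
  field_simp
  nlinarith [h1]

lemma k_mono {x y : ℝ} (hx : 0 ≤ x) (hxy : x ≤ y) : kfun a b σ x ≤ kfun a b σ y := by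
  apply Real.sqrt_le_sqrt
  nlinarith [mul_le_mul_of_nonneg_left hxy hb, sq_nonneg σ]

lemma xstar_nonneg : 0 ≤ (b - a + Real.sqrt ((b - a) ^ 2 + 2 * σ ^ 2)) / σ ^ 2 := by
  have h0 : (0:ℝ) ≤ (b - a) ^ 2 + 2 * σ ^ 2 := by positivity
  have h1 := Real.sq_sqrt h0
  have h2 := Real.sqrt_nonneg ((b - a) ^ 2 + 2 * σ ^ 2)
  apply div_nonneg _ (by positivity)
  nlinarith [sq_nonneg (a - b - Real.sqrt ((b - a) ^ 2 + 2 * σ ^ 2))]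

/-- g(x) ≤ x whenever x ≥ xstar. -/
lemma g_le_self {x : ℝ} (hx : (b - a + Real.sqrt ((b - a) ^ 2 + 2 * σ ^ 2)) / σ ^ 2 ≤ x) :
    (kfun a b σ x - a) / σ ^ 2 ≤ x := by
  have h0 : (0:ℝ) ≤ (b - a) ^ 2 + 2 * σ ^ 2 := by positivity
  have h1 := Real.sq_sqrt h0
  have h2 := Real.sqrt_nonneg ((b - a) ^ 2 + 2 * σ ^ 2)
  have hxs := xstar_nonneg ha hσ hb (b := b)
  have hx0 : 0 ≤ x := hxs.trans hx
  have hσ2 : (0:ℝ) < σ ^ 2 := by positivity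
  have hquad : 2 * (1 + b * x) * σ ^ 2 ≤ σ ^ 4 * x ^ 2 + 2 * a * σ ^ 2 * x := by
    have hx' : b - a + Real.sqrt ((b - a) ^ 2 + 2 * σ ^ 2) ≤ σ ^ 2 * x := by
      rw [div_le_iff₀ hσ2] at hx; linarith
    nlinarith [mul_le_mul_of_nonneg_left hx' h2,
      sq_nonneg (σ ^ 2 * x - (b - a) - Real.sqrt ((b - a) ^ 2 + 2 * σ ^ 2))]
  have hk : kfun a b σ x ≤ σ ^ 2 * x + a := by
    have : a ^ 2 + 2 * (1 + b * x) * σ ^ 2 ≤ (σ ^ 2 * x + a) ^ 2 := by nlinarith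
    calc kfun a b σ x ≤ Real.sqrt ((σ ^ 2 * x + a) ^ 2) := Real.sqrt_le_sqrt this
      _ = σ ^ 2 * x + a := Real.sqrt_sq (by positivity)
  rw [div_le_iff₀ hσ2]; nlinarith

end Aux

/-- uniform boundedness of the recursive delayed Riccati system:
with w̄₀ := (k(0)−a)/σ² and w̄ⱼ₊₁ := max(w̄ⱼ, (k(w̄ⱼ)−a)/σ²), the limit
L := lim w̄ⱼ exists and is finite, 0 ≤ φⱼ(t) ≤ L on each domain, and
L ≤ max((k(0)−a)/σ², (b − a + √((b−a)² + 2σ²))/σ²). -/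
theorem delayed_riccati_uniform_bound
    (a b σ τ T w : ℝ) (ha : 0 < a) (hσ : 0 < σ) (hb : 0 ≤ b) (hτ : 0 < τ)
    (hw : w ∈ Set.Ico (0 : ℝ) ((kfun a b σ 0 - a) / σ ^ 2))
    (φ : ℕ → ℝ → ℝ) (hφ : DelayedRiccatiSol a b σ τ T w φ)
    (wbar : ℕ → ℝ)
    (hwbar0 : wbar 0 = (kfun a b σ 0 - a) / σ ^ 2)
    (hwbar : ∀ j : ℕ, wbar (j + 1) = max (wbar j) ((kfun a b σ (wbar j) - a) / σ ^ 2)) :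
    ∃ L : ℝ, Filter.Tendsto wbar Filter.atTop (nhds L) ∧
      (∀ j : ℕ, ∀ t ∈ riccatiDom T τ j, 0 ≤ φ j t ∧ φ j t ≤ L) ∧
      L ≤ max ((kfun a b σ 0 - a) / σ ^ 2)
        ((b - a + Real.sqrt ((b - a) ^ 2 + 2 * σ ^ 2)) / σ ^ 2) := by
  obtain ⟨hw0, hwlt⟩ := hw
  obtain ⟨hφT, hφ0, hmatch, hφs⟩ := hφ
  set W : ℝ := (kfun a b σ 0 - a) / σ ^ 2 with hW
  set xs : ℝ := (b - a + Real.sqrt ((b - a) ^ 2 + 2 * σ ^ 2)) / σ ^ 2 with hxs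
  set M : ℝ := max W xs with hM
  have hσ2 : (0:ℝ) < σ ^ 2 := by positivity
  have hWnn : 0 ≤ W := g_nonneg ha hσ hb le_rfl
  have wnn : ∀ j, 0 ≤ wbar j := by
    intro j
    induction j with
    | zero => rw [hwbar0]; exact hWnn
    | succ j ih => rw [hwbar]; exact ih.trans (le_max_left _ _)
  have wstep : ∀ j, wbar j ≤ wbar (j + 1) := fun j => by
    rw [hwbar]; exact le_max_left _ _
  have wmono : Monotone wbar := monotone_nat_of_le_succ wstep
  have wgstep : ∀ j, (kfun a b σ (wbar j) - a) / σ ^ 2 ≤ wbar (j + 1) := fun j => by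
    rw [hwbar]; exact le_max_right _ _
  have wleM : ∀ j, wbar j ≤ M := by
    intro j
    induction j with
    | zero => rw [hwbar0]; exact le_max_left _ _
    | succ j ih =>
      rw [hwbar]
      refine max_le ih ?_
      rcases le_total (wbar j) xs with h | h
      · have h1 : kfun a b σ (wbar j) ≤ kfun a b σ xs := k_mono ha hσ hb (wnn j) h
        have h2 : (kfun a b σ (wbar j) - a) / σ ^ 2 ≤ (kfun a b σ xs - a) / σ ^ 2 := by
          gcongr
        have h3 : (kfun a b σ xs - a) / σ ^ 2 ≤ xs := g_le_self ha hσ hb le_rfl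
        exact (h2.trans h3).trans (le_max_right _ _)
      · exact (g_le_self ha hσ hb h).trans ih
  have hbdd : BddAbove (Set.range wbar) := ⟨M, by rintro _ ⟨j, rfl⟩; exact wleM j⟩
  set L : ℝ := ⨆ j, wbar j with hLdef
  have hL : Filter.Tendsto wbar Filter.atTop (nhds L) := tendsto_atTop_ciSup wmono hbdd
  have wjL : ∀ j, wbar j ≤ L := fun j => le_ciSup hbdd j
  have hLM : L ≤ M := ciSup_le wleM
  -- strict monotonicity of q(y) = σ²/2 y² + a y on [0, ∞)
  have qmono : ∀ x c : ℝ, 0 ≤ x → x < c →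
      σ ^ 2 / 2 * x ^ 2 + a * x < σ ^ 2 / 2 * c ^ 2 + a * c := by
    intro x c hx hxc
    nlinarith [mul_pos ha (sub_pos.mpr hxc),
      mul_nonneg (mul_nonneg (sq_nonneg σ) (sub_nonneg.mpr hxc.le))
        (by linarith : (0:ℝ) ≤ c + x)]
  have key0 : ∀ c : ℝ, wbar 0 < c → 1 < σ ^ 2 / 2 * c ^ 2 + a * c := by
    intro c hc
    have h1 := q_g ha hσ hb (le_refl (0:ℝ))
    have h2 := qmono W c hWnn (by rw [hwbar0] at hc; exact hc)
    rw [hW] at *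
    nlinarith [h1, h2]
  have key : ∀ j (c : ℝ), wbar (j + 1) < c →
      1 + b * wbar j < σ ^ 2 / 2 * c ^ 2 + a * c := by
    intro j c hc
    have hg0 : 0 ≤ (kfun a b σ (wbar j) - a) / σ ^ 2 := g_nonneg ha hσ hb (wnn j)
    have h1 := q_g ha hσ hb (wnn j)
    have h2 : (kfun a b σ (wbar j) - a) / σ ^ 2 < c := lt_of_le_of_lt (wgstep j) hc
    have h3 := qmono _ c hg0 h2
    linarith
  -- main induction
  have main : ∀ j, ∀ t ∈ riccatiDom T τ j, 0 ≤ φ j t ∧ φ j t ≤ wbar j := by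
    intro j
    induction j with
    | zero =>
      have hdom : riccatiDom T τ 0
          = Set.Icc (T - (((0:ℕ):ℝ) + 1) * τ) (T - ((0:ℕ):ℝ) * τ) := rfl
      have hBeq : T - ((0:ℕ):ℝ) * τ = T := by norm_num
      intro t ht
      constructor
      · refine sign_back _ _ (φ 0)
          (fun t => σ ^ 2 / 2 * (φ 0 t) ^ 2 + a * φ 0 t - 1) ?_ ?_ ?_ t (hdom ▸ ht)
        · intro u hu; exact hdom ▸ hφ0 u (hdom ▸ hu)
        · rw [hBeq, hφT]; exact hw0
        · intro u hu h0; rw [h0]; norm_num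
      · refine le_of_forall_gt_imp_ge_of_dense ?_
        intro c hc
        have hres := sign_back (T - (((0:ℕ):ℝ) + 1) * τ) (T - ((0:ℕ):ℝ) * τ)
          (fun t => c - φ 0 t)
          (fun t => -(σ ^ 2 / 2 * (φ 0 t) ^ 2 + a * φ 0 t - 1)) ?_ ?_ ?_ t (hdom ▸ ht)
        · have hres2 : 0 ≤ c - φ 0 t := hres
          linarith
        · intro u hu; exact (hdom ▸ hφ0 u (hdom ▸ hu)).const_sub c
        · have : φ 0 (T - ((0:ℕ):ℝ) * τ) = w := by rw [hBeq, hφT]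
          have hWc : W < c := by rw [hwbar0] at hc; exact hc
          simp only [this]; linarith
        · intro u hu h0
          have hφc : φ 0 u = c := by
            have : c - φ 0 u = 0 := h0
            linarith
          have := key0 c hc
          rw [hφc]; linarith
    | succ j ih =>
      have hdom : riccatiDom T τ (j + 1)
          = Set.Icc (T - (((j+1:ℕ):ℝ) + 1) * τ) (T - ((j+1:ℕ):ℝ) * τ) := rfl
      have hcast : ((j+1:ℕ):ℝ) = (j:ℝ) + 1 := by push_cast; ring
      have hBeq : T - ((j+1:ℕ):ℝ) * τ = T - ((j:ℝ) + 1) * τ := by rw [hcast]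
      have hBmem : T - ((j:ℝ) + 1) * τ ∈ riccatiDom T τ j := by
        constructor
        · exact le_rfl
        · have : (0:ℝ) ≤ (j:ℝ) := Nat.cast_nonneg j
          nlinarith
      have hBval : φ (j+1) (T - ((j+1:ℕ):ℝ) * τ) = φ j (T - ((j:ℝ) + 1) * τ) := by
        rw [hBeq]; exact hmatch j
      have hBj := ih _ hBmem
      have hshift : ∀ u ∈ riccatiDom T τ (j + 1), u + τ ∈ riccatiDom T τ j := by
        intro u hu
        rw [hdom] at hu
        obtain ⟨h1, h2⟩ := hu
        rw [hcast] at h1 h2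
        constructor
        · linarith
        · linarith
      intro t ht
      have hwj1 : wbar j ≤ wbar (j + 1) := wstep j
      constructor
      · refine sign_back _ _ (φ (j+1))
          (fun t => σ ^ 2 / 2 * (φ (j+1) t) ^ 2 + a * φ (j+1) t - 1 - b * φ j (t + τ))
          ?_ ?_ ?_ t (hdom ▸ ht)
        · intro u hu; exact hdom ▸ hφs j u (hdom ▸ hu)
        · rw [hBval]; exact hBj.1
        · intro u hu h0
          have hnn : 0 ≤ φ j (u + τ) := (ih _ (hshift u (hdom ▸ hu))).1
          rw [h0]
          nlinarith [mul_nonneg hb hnn]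
      · refine le_of_forall_gt_imp_ge_of_dense ?_
        intro c hc
        have hres := sign_back (T - (((j+1:ℕ):ℝ) + 1) * τ) (T - ((j+1:ℕ):ℝ) * τ)
          (fun t => c - φ (j+1) t)
          (fun t => -(σ ^ 2 / 2 * (φ (j+1) t) ^ 2 + a * φ (j+1) t - 1 - b * φ j (t + τ)))
          ?_ ?_ ?_ t (hdom ▸ ht)
        · have hres' : 0 ≤ c - φ (j+1) t := hres
          linarith
        · intro u hu; exact (hdom ▸ hφs j u (hdom ▸ hu)).const_sub c
        · simp only [hBval]; linarith [hBj.2]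
        · intro u hu h0
          have hφc : φ (j+1) u = c := by
            have : c - φ (j+1) u = 0 := h0
            linarith
          have hub : φ j (u + τ) ≤ wbar j := (ih _ (hshift u (hdom ▸ hu))).2
          have hkey := key j c hc
          have hbm : b * φ j (u + τ) ≤ b * wbar j := mul_le_mul_of_nonneg_left hub hb
          rw [hφc]
          linarith
  refine ⟨L, hL, fun j t ht => ⟨(main j t ht).1, (main j t ht).2.trans (wjL j)⟩, hLM⟩
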